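/- arXiv:2003.06391 — 2 statements merged into one kernel-verified Lean document; each statement's English description precedes it below -/
import Mathlib

section
/- Let V ∈ ℂ^{2n×n} satisfy V^H V = I_n and V^H F_{2n} V = 0, where F_{2n} is the 2n×2n flip matrix. Then U := [V, F_{2n} V F_n] ∈ ℂ^{2n×2n} is unitary and perplectic, i.e. U^H U = I_{2n} and U^H F_{2n} U = F_{2n}. -/
open Matrix

noncomputable def flipMat (m : ℕ) : Matrix (Fin m) (Fin m) ℂ :=
  Matrix.of fun i j => if (i : ℕ) + (j : ℕ) = m - 1 then 1 else 0

/-- The flip matrix on a `2n`-dimensional space indexed by `Fin n ⊕ Fin n`: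
`F_{2n} = [[0, F_n], [F_n, 0]]`. -/
noncomputable def flip2 (n : ℕ) : Matrix (Fin n ⊕ Fin n) (Fin n ⊕ Fin n) ℂ :=
  Matrix.fromBlocks 0 (flipMat n) (flipMat n) 0

lemma flipMat_eq (n : ℕ) :
    flipMat n = (1 : Matrix (Fin n) (Fin n) ℂ).submatrix id Fin.rev := by
  ext i j
  simp only [flipMat, Matrix.of_apply, Matrix.submatrix_apply, id, Matrix.one_apply]
  congr 1
  simp only [eq_iff_iff]
  constructor
  · intro h; ext; simp [Fin.rev]; omega
  · intro h; subst h; simp [Fin.rev]; omega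

lemma flipMat_eq' (n : ℕ) :
    flipMat n = (1 : Matrix (Fin n) (Fin n) ℂ).submatrix Fin.rev id := by
  ext i j
  simp only [flipMat, Matrix.of_apply, Matrix.submatrix_apply, id, Matrix.one_apply]
  congr 1
  simp only [eq_iff_iff]
  constructor
  · intro h; ext; simp [Fin.rev]; omega
  · intro h; subst h; simp [Fin.rev]; omega

lemma flipMat_mul_flipMat (n : ℕ) : flipMat n * flipMat n = 1 := by
  nth_rewrite 2 [flipMat_eq']
  rw [flipMat_eq]
  rw [show ((1 : Matrix (Fin n) (Fin n) ℂ).submatrix id Fin.rev : Matrix _ _ ℂ)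
      = (1 : Matrix (Fin n) (Fin n) ℂ).submatrix id ⇑Fin.revPerm from rfl,
    show ((1 : Matrix (Fin n) (Fin n) ℂ).submatrix Fin.rev id : Matrix _ _ ℂ)
      = (1 : Matrix (Fin n) (Fin n) ℂ).submatrix ⇑Fin.revPerm id from rfl,
    Matrix.submatrix_mul_equiv, Matrix.one_mul, Matrix.submatrix_id_id]

lemma flipMat_conjTranspose (n : ℕ) : (flipMat n)ᴴ = flipMat n := by
  ext i j
  simp only [flipMat, Matrix.conjTranspose_apply, Matrix.of_apply, add_comm]
  split <;> simp

lemma flip2_conjTranspose (n : ℕ) : (flip2 n)ᴴ = flip2 n := by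
  simp [flip2, Matrix.fromBlocks_conjTranspose, flipMat_conjTranspose]

lemma flip2_mul_flip2 (n : ℕ) : flip2 n * flip2 n = 1 := by
  simp [flip2, Matrix.fromBlocks_multiply, flipMat_mul_flipMat,
    ← Matrix.fromBlocks_one]

theorem stmt10 (n : ℕ) (V : Matrix (Fin n ⊕ Fin n) (Fin n) ℂ)
    (hV : Vᴴ * V = 1) (hVF : Vᴴ * flip2 n * V = 0) :
    (Matrix.fromCols V (flip2 n * V * flipMat n))ᴴ *
        Matrix.fromCols V (flip2 n * V * flipMat n) = 1 ∧
    (Matrix.fromCols V (flip2 n * V * flipMat n))ᴴ * flip2 n *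
        Matrix.fromCols V (flip2 n * V * flipMat n) = flip2 n := by
  have hF := flipMat_mul_flipMat n
  have hFH := flipMat_conjTranspose n
  have hF2H := flip2_conjTranspose n
  have hF22 := flip2_mul_flip2 n
  set W := flip2 n * V * flipMat n with hW
  have hWH : Wᴴ = flipMat n * Vᴴ * flip2 n := by
    simp [hW, Matrix.conjTranspose_mul, hFH, hF2H, Matrix.mul_assoc]
  have h1 : Vᴴ * W = 0 := by
    rw [hW, ← Matrix.mul_assoc, ← Matrix.mul_assoc, hVF, Matrix.zero_mul]
  have h2 : Wᴴ * V = 0 := by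
    calc Wᴴ * V = flipMat n * (Vᴴ * flip2 n * V) := by
          rw [hWH]; simp only [Matrix.mul_assoc]
      _ = 0 := by rw [hVF, Matrix.mul_zero]
  have h3 : Wᴴ * W = 1 := by
    rw [hWH, hW]
    calc flipMat n * Vᴴ * flip2 n * (flip2 n * V * flipMat n)
        = flipMat n * (Vᴴ * ((flip2 n * flip2 n) * V)) * flipMat n := by
          simp only [Matrix.mul_assoc]
      _ = 1 := by rw [hF22, Matrix.one_mul, hV, Matrix.mul_one, hF]
  have h4 : Vᴴ * (flip2 n * W) = flipMat n := by
    calc Vᴴ * (flip2 n * W) = Vᴴ * ((flip2 n * flip2 n) * V) * flipMat n := by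
          rw [hW]; simp only [Matrix.mul_assoc]
      _ = flipMat n := by rw [hF22, Matrix.one_mul, hV, Matrix.one_mul]
  have h5 : Wᴴ * (flip2 n * V) = flipMat n := by
    rw [hWH]
    calc flipMat n * Vᴴ * flip2 n * (flip2 n * V)
        = flipMat n * (Vᴴ * ((flip2 n * flip2 n) * V)) := by
          simp only [Matrix.mul_assoc]
      _ = flipMat n := by rw [hF22, Matrix.one_mul, hV, Matrix.mul_one]
  have h6 : Wᴴ * (flip2 n * W) = 0 := by
    rw [hWH, hW]
    calc flipMat n * Vᴴ * flip2 n * (flip2 n * (flip2 n * V * flipMat n))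
        = flipMat n * (((Vᴴ * (flip2 n * flip2 n)) * flip2 n * V) * flipMat n) := by
          simp only [Matrix.mul_assoc]
      _ = 0 := by rw [hF22, Matrix.mul_one, hVF, Matrix.zero_mul, Matrix.mul_zero]
  rw [Matrix.conjTranspose_fromCols_eq_fromRows_conjTranspose]
  constructor
  · rw [Matrix.fromRows_mul_fromCols, hV, h1, h2, h3, ← Matrix.fromBlocks_one]
  · rw [Matrix.mul_assoc, Matrix.mul_fromCols, Matrix.fromRows_mul_fromCols,
      ← Matrix.mul_assoc Vᴴ, hVF, h4, h5, h6, flip2]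
end

section
/- Let A ∈ ℂ^{2n×2n} be Hamiltonian and let X₀ = Z D₀ Z^H with Z unitary symplectic and D₀ = diag(Z^H A Z) be a closest normal Hamiltonian matrix to A in the Frobenius norm (among normal Hamiltonian matrices admitting such a decomposition). Then for every unitary symplectic Q, ‖diag(Q^H A Q)‖_F ≤ ‖diag(Z^H A Z)‖_F. -/
open Matrix

noncomputable def Jmat (n : ℕ) : Matrix (Fin n ⊕ Fin n) (Fin n ⊕ Fin n) ℂ :=
  Matrix.fromBlocks 0 1 (-1) 0

noncomputable def frob {m : Type*} [Fintype m] (M : Matrix m m ℂ) : ℝ :=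
  Real.sqrt (∑ i, ∑ j, ‖M i j‖ ^ 2)

noncomputable def diagPart {m : Type*} [Fintype m] [DecidableEq m] (M : Matrix m m ℂ) :
    Matrix m m ℂ :=
  Matrix.diagonal (fun i => M i i)

noncomputable def frobSq {m : Type*} [Fintype m] (M : Matrix m m ℂ) : ℝ :=
  ∑ i, ∑ j, ‖M i j‖ ^ 2

lemma frob_eq_sqrt {m : Type*} [Fintype m] (M : Matrix m m ℂ) :
    frob M = Real.sqrt (frobSq M) := rfl

lemma frobSq_nonneg {m : Type*} [Fintype m] (M : Matrix m m ℂ) : 0 ≤ frobSq M := by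
  unfold frobSq; positivity

lemma frobSq_eq_trace {m : Type*} [Fintype m] [DecidableEq m] (M : Matrix m m ℂ) :
    frobSq M = (Matrix.trace (Mᴴ * M)).re := by
  simp only [frobSq, Matrix.trace, Matrix.diag, Matrix.mul_apply,
    Matrix.conjTranspose_apply, Complex.re_sum]
  rw [Finset.sum_comm]
  refine Finset.sum_congr rfl fun i _ => Finset.sum_congr rfl fun j _ => ?_
  rw [Complex.sq_norm]
  simp [Complex.normSq_apply, Complex.mul_re]

lemma frobSq_conj {m : Type*} [Fintype m] [DecidableEq m] (U M : Matrix m m ℂ)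
    (hU : Uᴴ * U = 1) : frobSq (Uᴴ * M * U) = frobSq M := by
  have hU' : U * Uᴴ = 1 := mul_eq_one_comm.mp hU
  rw [frobSq_eq_trace, frobSq_eq_trace]
  congr 1
  have : (Uᴴ * M * U)ᴴ * (Uᴴ * M * U) = Uᴴ * (Mᴴ * M) * U := by
    simp only [Matrix.conjTranspose_mul, Matrix.conjTranspose_conjTranspose,
      Matrix.mul_assoc]
    rw [← Matrix.mul_assoc U Uᴴ, hU', Matrix.one_mul]
  rw [this, Matrix.trace_mul_cycle, ← Matrix.mul_assoc, hU', Matrix.one_mul]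

lemma frobSq_split {m : Type*} [Fintype m] [DecidableEq m] (M : Matrix m m ℂ) :
    frobSq M = frobSq (diagPart M) + frobSq (M - diagPart M) := by
  unfold frobSq diagPart
  rw [← Finset.sum_add_distrib]
  refine Finset.sum_congr rfl fun i _ => ?_
  rw [← Finset.sum_add_distrib]
  refine Finset.sum_congr rfl fun j _ => ?_
  by_cases h : i = j
  · subst h; simp
  · simp [Matrix.diagonal_apply_ne _ h, Matrix.sub_apply]

lemma key {m : Type*} [Fintype m] [DecidableEq m] (A Q : Matrix m m ℂ)
    (hQ : Qᴴ * Q = 1) :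
    frobSq (A - Q * diagPart (Qᴴ * A * Q) * Qᴴ) =
      frobSq A - frobSq (diagPart (Qᴴ * A * Q)) := by
  have hQ' : Q * Qᴴ = 1 := mul_eq_one_comm.mp hQ
  have h1 : Qᴴ * (A - Q * diagPart (Qᴴ * A * Q) * Qᴴ) * Q
      = Qᴴ * A * Q - diagPart (Qᴴ * A * Q) := by
    rw [Matrix.mul_sub, Matrix.sub_mul]
    congr 1
    rw [show Qᴴ * (Q * diagPart (Qᴴ * A * Q) * Qᴴ) * Q
        = (Qᴴ * Q) * diagPart (Qᴴ * A * Q) * (Qᴴ * Q) by simp [Matrix.mul_assoc], hQ]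
    simp
  have h2 := frobSq_conj Q (A - Q * diagPart (Qᴴ * A * Q) * Qᴴ) hQ
  rw [h1] at h2
  have h3 := frobSq_conj Q A hQ
  have h4 := frobSq_split (Qᴴ * A * Q)
  rw [h3] at h4
  linarith

set_option maxHeartbeats 1000000 in
theorem stmt15 (n : ℕ) (A Z : Matrix (Fin n ⊕ Fin n) (Fin n ⊕ Fin n) ℂ)
    (hA : (Jmat n * A)ᴴ = Jmat n * A)
    (hZunit : Zᴴ * Z = 1) (hZsymp : Zᴴ * Jmat n * Z = Jmat n)
    (hmin : ∀ Q : Matrix (Fin n ⊕ Fin n) (Fin n ⊕ Fin n) ℂ,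
      Qᴴ * Q = 1 → Qᴴ * Jmat n * Q = Jmat n →
      frob (A - Z * diagPart (Zᴴ * A * Z) * Zᴴ) ≤ frob (A - Q * diagPart (Qᴴ * A * Q) * Qᴴ)) :
    ∀ Q : Matrix (Fin n ⊕ Fin n) (Fin n ⊕ Fin n) ℂ,
      Qᴴ * Q = 1 → Qᴴ * Jmat n * Q = Jmat n →
      frob (diagPart (Qᴴ * A * Q)) ≤ frob (diagPart (Zᴴ * A * Z)) := by
  intro Q hQunit hQsymp
  have h := hmin Q hQunit hQsymp
  rw [frob_eq_sqrt, frob_eq_sqrt, key A Z hZunit, key A Q hQunit] at h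
  have hZ0 : 0 ≤ frobSq A - frobSq (diagPart (Zᴴ * A * Z)) := by
    rw [← key A Z hZunit]; exact frobSq_nonneg _
  have hQ0 : 0 ≤ frobSq A - frobSq (diagPart (Qᴴ * A * Q)) := by
    rw [← key A Q hQunit]; exact frobSq_nonneg _
  have h2 : frobSq A - frobSq (diagPart (Zᴴ * A * Z))
      ≤ frobSq A - frobSq (diagPart (Qᴴ * A * Q)) :=
    (Real.sqrt_le_sqrt_iff hQ0).mp h
  rw [frob_eq_sqrt, frob_eq_sqrt]
  exact Real.sqrt_le_sqrt (by linarith)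
end
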